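/- Let A be an associative unital ℚ-algebra and let (J0, Jp, Jm, P) be an osp(1,2)-realization in A. In A ⊗ A ⊗ A, with the intermediate Casimirs Γ_S for subsets S of {1,2,3} as defined in the context, the Bannai–Ito relation {Γ13, Γ23} = Γ12 + 2*Γ3*Γ123 + 2*Γ1*Γ2 holds, where {x,y} = x*y + y*x. -/

import Mathlib

set_option maxHeartbeats 1000000

open scoped TensorProduct

/-- Bannai–Ito relation: {Γ13, Γ23} = Γ12 + 2*Γ3*Γ123 + 2*Γ1*Γ2 in A ⊗ A ⊗ A. -/
theorem bannai_ito_relation_13_23 {A : Type*} [Ring A] [Algebra ℚ A]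
    (J0 Jp Jm P : A)
    (h1 : J0*Jp - Jp*J0 = Jp)
    (h2 : J0*Jm - Jm*J0 = -Jm)
    (h3 : Jp*Jm + Jm*Jp = 2*J0)
    (h4 : J0*P = P*J0)
    (h5 : Jp*P + P*Jp = 0)
    (h6 : Jm*P + P*Jm = 0)
    (h7 : P^2 = 1) :
    -- intermediate Casimir operators Γ_S in A ⊗ A ⊗ A for subsets S of {1,2,3}
    let Γ1 : A ⊗[ℚ] (A ⊗[ℚ] A) :=
      (J0 ⊗ₜ[ℚ] ((1:A) ⊗ₜ[ℚ] (1:A))) * (P ⊗ₜ[ℚ] ((1:A) ⊗ₜ[ℚ] (1:A)))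
        - (Jp ⊗ₜ[ℚ] ((1:A) ⊗ₜ[ℚ] (1:A))) * (Jm ⊗ₜ[ℚ] ((1:A) ⊗ₜ[ℚ] (1:A))) * (P ⊗ₜ[ℚ] ((1:A) ⊗ₜ[ℚ] (1:A)))
        - (1/2 : ℚ) • (P ⊗ₜ[ℚ] ((1:A) ⊗ₜ[ℚ] (1:A)))
    let Γ2 : A ⊗[ℚ] (A ⊗[ℚ] A) :=
      ((1:A) ⊗ₜ[ℚ] (J0 ⊗ₜ[ℚ] (1:A))) * ((1:A) ⊗ₜ[ℚ] (P ⊗ₜ[ℚ] (1:A)))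
        - ((1:A) ⊗ₜ[ℚ] (Jp ⊗ₜ[ℚ] (1:A))) * ((1:A) ⊗ₜ[ℚ] (Jm ⊗ₜ[ℚ] (1:A))) * ((1:A) ⊗ₜ[ℚ] (P ⊗ₜ[ℚ] (1:A)))
        - (1/2 : ℚ) • ((1:A) ⊗ₜ[ℚ] (P ⊗ₜ[ℚ] (1:A)))
    let Γ3 : A ⊗[ℚ] (A ⊗[ℚ] A) :=
      ((1:A) ⊗ₜ[ℚ] ((1:A) ⊗ₜ J0)) * ((1:A) ⊗ₜ[ℚ] ((1:A) ⊗ₜ P))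
        - ((1:A) ⊗ₜ[ℚ] ((1:A) ⊗ₜ Jp)) * ((1:A) ⊗ₜ[ℚ] ((1:A) ⊗ₜ Jm)) * ((1:A) ⊗ₜ[ℚ] ((1:A) ⊗ₜ P))
        - (1/2 : ℚ) • ((1:A) ⊗ₜ[ℚ] ((1:A) ⊗ₜ P))
    let Γ12 : A ⊗[ℚ] (A ⊗[ℚ] A) :=
      (J0 ⊗ₜ[ℚ] ((1:A) ⊗ₜ[ℚ] (1:A)) + (1:A) ⊗ₜ[ℚ] (J0 ⊗ₜ[ℚ] (1:A))) * (P ⊗ₜ[ℚ] (P ⊗ₜ[ℚ] (1:A)))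
        - (Jp ⊗ₜ[ℚ] (P ⊗ₜ[ℚ] (1:A)) + (1:A) ⊗ₜ[ℚ] (Jp ⊗ₜ[ℚ] (1:A)))
            * (Jm ⊗ₜ[ℚ] (P ⊗ₜ[ℚ] (1:A)) + (1:A) ⊗ₜ[ℚ] (Jm ⊗ₜ[ℚ] (1:A))) * (P ⊗ₜ[ℚ] (P ⊗ₜ[ℚ] (1:A)))
        - (1/2 : ℚ) • (P ⊗ₜ[ℚ] (P ⊗ₜ[ℚ] (1:A)))
    let Γ13 : A ⊗[ℚ] (A ⊗[ℚ] A) :=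
      (J0 ⊗ₜ[ℚ] ((1:A) ⊗ₜ[ℚ] (1:A)) + (1:A) ⊗ₜ[ℚ] ((1:A) ⊗ₜ J0)) * (P ⊗ₜ[ℚ] ((1:A) ⊗ₜ P))
        - (Jp ⊗ₜ[ℚ] (P ⊗ₜ P) + (1:A) ⊗ₜ[ℚ] ((1:A) ⊗ₜ Jp))
            * (Jm ⊗ₜ[ℚ] (P ⊗ₜ P) + (1:A) ⊗ₜ[ℚ] ((1:A) ⊗ₜ Jm)) * (P ⊗ₜ[ℚ] ((1:A) ⊗ₜ P))
        - (1/2 : ℚ) • (P ⊗ₜ[ℚ] ((1:A) ⊗ₜ P))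
    let Γ23 : A ⊗[ℚ] (A ⊗[ℚ] A) :=
      ((1:A) ⊗ₜ[ℚ] (J0 ⊗ₜ[ℚ] (1:A)) + (1:A) ⊗ₜ[ℚ] ((1:A) ⊗ₜ J0)) * ((1:A) ⊗ₜ[ℚ] (P ⊗ₜ P))
        - ((1:A) ⊗ₜ[ℚ] (Jp ⊗ₜ P) + (1:A) ⊗ₜ[ℚ] ((1:A) ⊗ₜ Jp))
            * ((1:A) ⊗ₜ[ℚ] (Jm ⊗ₜ P) + (1:A) ⊗ₜ[ℚ] ((1:A) ⊗ₜ Jm)) * ((1:A) ⊗ₜ[ℚ] (P ⊗ₜ P))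
        - (1/2 : ℚ) • ((1:A) ⊗ₜ[ℚ] (P ⊗ₜ P))
    let Γ123 : A ⊗[ℚ] (A ⊗[ℚ] A) :=
      (J0 ⊗ₜ[ℚ] ((1:A) ⊗ₜ[ℚ] (1:A)) + (1:A) ⊗ₜ[ℚ] (J0 ⊗ₜ[ℚ] (1:A)) + (1:A) ⊗ₜ[ℚ] ((1:A) ⊗ₜ J0))
          * (P ⊗ₜ[ℚ] (P ⊗ₜ P))
        - (Jp ⊗ₜ[ℚ] (P ⊗ₜ P) + (1:A) ⊗ₜ[ℚ] (Jp ⊗ₜ P) + (1:A) ⊗ₜ[ℚ] ((1:A) ⊗ₜ Jp))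
            * (Jm ⊗ₜ[ℚ] (P ⊗ₜ P) + (1:A) ⊗ₜ[ℚ] (Jm ⊗ₜ P) + (1:A) ⊗ₜ[ℚ] ((1:A) ⊗ₜ Jm))
            * (P ⊗ₜ[ℚ] (P ⊗ₜ P))
        - (1/2 : ℚ) • (P ⊗ₜ[ℚ] (P ⊗ₜ P))
    Γ13*Γ23 + Γ23*Γ13 = Γ12 + 2*Γ3*Γ123 + 2*Γ1*Γ2 := by
  have pJp : ∀ x : A, P*(Jp*x) = -(Jp*(P*x)) := by
    have h' : P*Jp = -(Jp*P) := eq_neg_of_add_eq_zero_right h5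
    intro x; rw [← mul_assoc, h', neg_mul, mul_assoc]
  have pJm : ∀ x : A, P*(Jm*x) = -(Jm*(P*x)) := by
    have h' : P*Jm = -(Jm*P) := eq_neg_of_add_eq_zero_right h6
    intro x; rw [← mul_assoc, h', neg_mul, mul_assoc]
  have pJ0 : ∀ x : A, P*(J0*x) = J0*(P*x) := by
    intro x; rw [← mul_assoc, ← h4, mul_assoc]
  have pP : ∀ x : A, P*(P*x) = x := by
    intro x; rw [← mul_assoc, ← sq, h7, one_mul]
  have pJp' : P*Jp = -(Jp*P) := eq_neg_of_add_eq_zero_right h5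
  have pJm' : P*Jm = -(Jm*P) := eq_neg_of_add_eq_zero_right h6
  have pJ0' : P*J0 = J0*P := h4.symm
  have pP' : P*P = 1 := by rw [← sq, h7]
  have zJp : ∀ x : A, J0*(Jp*x) = Jp*(J0*x) + Jp*x := by
    have h' : J0*Jp = Jp*J0 + Jp := by linear_combination (norm := noncomm_ring) h1
    intro x; rw [← mul_assoc, h', add_mul, mul_assoc]
  have zJp' : J0*Jp = Jp*J0 + Jp := by linear_combination (norm := noncomm_ring) h1
  have mJ0 : ∀ x : A, Jm*(J0*x) = J0*(Jm*x) + Jm*x := by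
    have h' : Jm*J0 = J0*Jm + Jm := by
      have := h2; linear_combination (norm := noncomm_ring) -this
    intro x; rw [← mul_assoc, h', add_mul, mul_assoc]
  have mJ0' : Jm*J0 = J0*Jm + Jm := by
    linear_combination (norm := noncomm_ring) -h2
  have mJp : ∀ x : A, Jm*(Jp*x) = J0*x + J0*x - Jp*(Jm*x) := by
    have h' : Jm*Jp = J0 + J0 - Jp*Jm := by
      linear_combination (norm := noncomm_ring) h3
    intro x; rw [← mul_assoc, h', sub_mul, add_mul, mul_assoc]
  have mJp' : Jm*Jp = J0 + J0 - Jp*Jm := by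
    linear_combination (norm := noncomm_ring) h3
  intro Γ1 Γ2 Γ3 Γ12 Γ13 Γ23 Γ123
  simp only [Γ1, Γ2, Γ3, Γ12, Γ13, Γ23, Γ123]
  simp only [two_mul, mul_add, add_mul, sub_mul, mul_sub, smul_mul_assoc, mul_smul_comm,
    mul_assoc, Algebra.TensorProduct.tmul_mul_tmul, one_mul, mul_one]
  simp only [mul_assoc, one_mul, mul_one, mul_add, add_mul, mul_sub, sub_mul,
    neg_mul, mul_neg, neg_neg,
    TensorProduct.tmul_add, TensorProduct.add_tmul, TensorProduct.tmul_sub,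
    TensorProduct.sub_tmul, TensorProduct.tmul_neg, TensorProduct.neg_tmul,
    TensorProduct.tmul_smul, ← TensorProduct.smul_tmul',
    pJp, pJm, pJ0, pP, pJp', pJm', pJ0', pP', zJp, zJp', mJ0, mJ0', mJp, mJp']
  module
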